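/- Let t ≥ 1 and 2 ≤ ω ≤ t be integers. Let H be a t-tree built from an initial clique K on t vertices, equipped with a red-blue edge-coloring in which every edge of K is red and H contains no blue clique on ω + 1 vertices. Then there exists an assignment γ of a set of exactly t colors from {1, …, t² + ω − 1} to each vertex of H such that γ(u) ∩ γ(v) = ∅ whenever u and v are joined by a blue edge, and |γ(u) ∩ γ(v)| = 1 whenever u and v are joined by a red edge. -/

import Mathlib

open MeasureTheory ENNReal

/-- `H` (a graph on vertex set `Fin n`) is a `t`-tree, witnessed by the natural ordering of
`Fin n`: the first `t` vertices form a clique, and every later vertex has a backward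
neighborhood that is a clique on exactly `t` vertices. -/
def IsTTree (t n : ℕ) (H : SimpleGraph (Fin n)) : Prop :=
  t ≤ n ∧
  (∀ i j : Fin n, (i : ℕ) < t → (j : ℕ) < t → i ≠ j → H.Adj i j) ∧
  ∀ i : Fin n, t ≤ (i : ℕ) →
    H.IsClique {j : Fin n | j < i ∧ H.Adj i j} ∧ {j : Fin n | j < i ∧ H.Adj i j}.ncard = t

/-- `G` has treewidth at most `t`, i.e. `G` is a partial `t`-tree: a subgraph of some `t`-tree. -/
def TreewidthAtMost {V : Type} (G : SimpleGraph V) (t : ℕ) : Prop :=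
  ∃ (n : ℕ) (H : SimpleGraph (Fin n)) (f : V → Fin n),
    IsTTree t n H ∧ Function.Injective f ∧ ∀ u v : V, G.Adj u v → H.Adj (f u) (f v)

/-- A fractional coloring of `G`: each vertex gets a measurable subset of `ℝ` of Lebesgue
measure `1`, with adjacent vertices receiving disjoint sets. -/
def IsFracColoring {V : Type} (G : SimpleGraph V) (φ : V → Set ℝ) : Prop :=
  (∀ v, MeasurableSet (φ v)) ∧ (∀ v, volume (φ v) = 1) ∧
  ∀ u v : V, G.Adj u v → φ u ∩ φ v = ∅

/-- The fractional chromatic number of `G`: the infimum over all fractional colorings of the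
Lebesgue measure of the union of all color sets. -/
noncomputable def fracChromNum {V : Type} (G : SimpleGraph V) : ℝ≥0∞ :=
  ⨅ (φ : V → Set ℝ) (_ : IsFracColoring G φ), volume (⋃ v : V, φ v)

/- ================= auxiliary development ================= -/

/-- Encoding of an unordered pair of numbers `< t` as a color in `{1, …, t^2}`. -/
private def enc (t a b : ℕ) : ℕ := min a b * t + max a b + 1

/-- Initial coloring of the first `t` vertices. -/
private def gamma0 (t : ℕ) {n : ℕ} (v : Fin n) : Finset ℕ :=
  (Finset.range t).image (fun j => enc t (v : ℕ) j)

/-- The inductive invariant: a good partial coloring of the first `i` vertices. -/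
private def Good (t ω : ℕ) {n : ℕ} (H : SimpleGraph (Fin n)) (blue : Fin n → Fin n → Prop)
    (γ : Fin n → Finset ℕ) (i : ℕ) : Prop :=
  (∀ v : Fin n, (v : ℕ) < i → γ v ⊆ Finset.Icc 1 (t ^ 2 + ω - 1)) ∧
  (∀ v : Fin n, (v : ℕ) < i → (γ v).card = t) ∧
  (∀ u v : Fin n, (u : ℕ) < i → (v : ℕ) < i → H.Adj u v → blue u v → γ u ∩ γ v = ∅) ∧
  (∀ u v : Fin n, (u : ℕ) < i → (v : ℕ) < i → H.Adj u v → ¬ blue u v → (γ u ∩ γ v).card = 1) ∧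
  (∀ S : Finset (Fin n), (∀ v ∈ S, (v : ℕ) < i) → ((S : Set (Fin n)).Pairwise H.Adj) →
    ∀ c : ℕ, (S.filter (fun v => c ∈ γ v)).card ≤ 2)

private lemma enc_inj {t a b a' b' : ℕ} (hb : b < t) (hb' : b' < t)
    (h : a * t + b = a' * t + b') : a = a' ∧ b = b' := by
  have h1 : (a * t + b) % t = b % t := by rw [Nat.mul_comm]; exact Nat.mul_add_mod t a b
  have h2 : (a' * t + b') % t = b' % t := by rw [Nat.mul_comm]; exact Nat.mul_add_mod t a' b'
  rw [Nat.mod_eq_of_lt hb] at h1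
  rw [Nat.mod_eq_of_lt hb'] at h2
  have hbb : b = b' := by rw [← h1, h, h2]
  subst hbb
  have ht : 0 < t := Nat.lt_of_le_of_lt (Nat.zero_le _) hb
  have hmul : a * t = a' * t := by omega
  exact ⟨Nat.eq_of_mul_eq_mul_right ht hmul, rfl⟩

private lemma enc_eq {t a b a' b' : ℕ} (ha : a < t) (hb : b < t) (ha' : a' < t) (hb' : b' < t)
    (h : enc t a b = enc t a' b') : min a b = min a' b' ∧ max a b = max a' b' := by
  unfold enc at h
  have h' : min a b * t + max a b = min a' b' * t + max a' b' := by omega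
  exact enc_inj (by omega) (by omega) h'

private lemma enc_le {t a b : ℕ} (ha : a < t) (hb : b < t) : enc t a b ≤ t ^ 2 := by
  obtain ⟨s, rfl⟩ : ∃ s, t = s + 1 := ⟨t - 1, by omega⟩
  have h1 : min a b ≤ s := by omega
  have := Nat.mul_le_mul_right (s + 1) h1
  have h2 : (s + 1) ^ 2 = s * (s + 1) + s + 1 := by ring
  unfold enc
  omega

private lemma good_init {t ω n : ℕ} (ht : 1 ≤ t) (hω2 : 2 ≤ ω)
    (H : SimpleGraph (Fin n)) (blue : Fin n → Fin n → Prop)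
    (hinit : ∀ i j : Fin n, (i : ℕ) < t → (j : ℕ) < t → i ≠ j → ¬blue i j) :
    Good t ω H blue (gamma0 t) t := by
  classical
  have hmem : ∀ (v : Fin n) (c : ℕ), c ∈ gamma0 t v ↔ ∃ j < t, enc t (v : ℕ) j = c := by
    intro v c
    simp [gamma0, Finset.mem_image, Finset.mem_range]
  refine ⟨?_, ?_, ?_, ?_, ?_⟩
  · intro v hv c hc
    rw [hmem] at hc
    obtain ⟨j, hj, rfl⟩ := hc
    have h1 := enc_le hv hj
    have h2 : 1 ≤ enc t (v : ℕ) j := by unfold enc; omega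
    rw [Finset.mem_Icc]
    omega
  · intro v hv
    rw [gamma0, Finset.card_image_of_injOn, Finset.card_range]
    intro j hj j' hj' hjj
    simp only [Finset.coe_range, Set.mem_Iio] at hj hj'
    obtain ⟨h1, h2⟩ := enc_eq hv hj hv hj' hjj
    omega
  · intro u v hu hv hadj hblue
    exact absurd hblue (hinit u v hu hv hadj.ne)
  · intro u v hu hv hadj hblue
    have hne : (u : ℕ) ≠ (v : ℕ) := fun h => hadj.ne (Fin.val_injective h)
    have : gamma0 t u ∩ gamma0 t v = {enc t (u : ℕ) (v : ℕ)} := by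
      ext c
      simp only [Finset.mem_inter, Finset.mem_singleton, hmem]
      constructor
      · rintro ⟨⟨j, hj, rfl⟩, ⟨j', hj', hc'⟩⟩
        obtain ⟨h1, h2⟩ := enc_eq hv hj' hu hj hc'
        have e1 : min (u : ℕ) j = min (u : ℕ) (v : ℕ) := by omega
        have e2 : max (u : ℕ) j = max (u : ℕ) (v : ℕ) := by omega
        unfold enc
        rw [e1, e2]
      · rintro rfl
        exact ⟨⟨v, hv, rfl⟩, ⟨u, hu, by unfold enc; rw [min_comm, max_comm]⟩⟩
    rw [this, Finset.card_singleton]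
  · intro S hS hpair c
    by_contra hcon
    push_neg at hcon
    rw [Finset.two_lt_card_iff] at hcon
    obtain ⟨a, b, d, ha, hb, hd, hab, had, hbd⟩ := hcon
    simp only [Finset.mem_filter] at ha hb hd
    obtain ⟨haS, hac⟩ := ha
    obtain ⟨hbS, hbc⟩ := hb
    obtain ⟨hdS, hdc⟩ := hd
    rw [hmem] at hac hbc hdc
    obtain ⟨ja, hja, hca⟩ := hac
    obtain ⟨jb, hjb, hcb⟩ := hbc
    obtain ⟨jd, hjd, hcd⟩ := hdc
    have hat : (a : ℕ) < t := hS a haS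
    have hbt : (b : ℕ) < t := hS b hbS
    have hdt : (d : ℕ) < t := hS d hdS
    obtain ⟨e1, e2⟩ := enc_eq hat hja hbt hjb (hca.trans hcb.symm)
    obtain ⟨e3, e4⟩ := enc_eq hat hja hdt hjd (hca.trans hcd.symm)
    have nab : (a : ℕ) ≠ (b : ℕ) := fun h => hab (Fin.val_injective h)
    have nad : (a : ℕ) ≠ (d : ℕ) := fun h => had (Fin.val_injective h)
    have nbd : (b : ℕ) ≠ (d : ℕ) := fun h => hbd (Fin.val_injective h)
    omega

private lemma good_step {t ω n : ℕ} (ht : 1 ≤ t) (hω2 : 2 ≤ ω) (hωt : ω ≤ t)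
    (H : SimpleGraph (Fin n)) (hH : IsTTree t n H)
    (blue : Fin n → Fin n → Prop) (hsymm : ∀ u v, blue u v → blue v u)
    (hnoblue : ¬∃ S : Finset (Fin n), S.card = ω + 1 ∧
        (S : Set (Fin n)).Pairwise (fun u v => H.Adj u v ∧ blue u v))
    {γ : Fin n → Finset ℕ} {i : ℕ} (hti : t ≤ i) (hin : i < n)
    (hg : Good t ω H blue γ i) : ∃ γ', Good t ω H blue γ' (i + 1) := by
  classical
  obtain ⟨htn, hinitAdj, hstep⟩ := hH
  obtain ⟨hg1, hg2, hg3, hg4, hg5⟩ := hg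
  set vi : Fin n := ⟨i, hin⟩ with hvi
  have hvival : (vi : ℕ) = i := rfl
  obtain ⟨hclique, hncard⟩ := hstep vi hti
  have hfin : ({j : Fin n | j < vi ∧ H.Adj vi j}).Finite := Set.toFinite _
  set Cf : Finset (Fin n) := hfin.toFinset with hCfdef
  have hmemCf : ∀ u : Fin n, u ∈ Cf ↔ u < vi ∧ H.Adj vi u := by
    intro u; rw [hCfdef, Set.Finite.mem_toFinset]; exact Iff.rfl
  have hCfcard : Cf.card = t := by
    rw [hCfdef, ← Set.ncard_eq_toFinset_card]; exact hncard
  have hlt : ∀ u ∈ Cf, (u : ℕ) < i := by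
    intro u hu
    have := ((hmemCf u).1 hu).1
    rwa [Fin.lt_def] at this
  have hadjvi : ∀ u ∈ Cf, H.Adj vi u := fun u hu => ((hmemCf u).1 hu).2
  have hviCf : vi ∉ Cf := fun h => lt_irrefl vi ((hmemCf vi).1 h).1
  have hadjC : ∀ u ∈ Cf, ∀ v ∈ Cf, u ≠ v → H.Adj u v := by
    intro u hu v hv huv
    exact hclique ((hmemCf u).1 hu) ((hmemCf v).1 hv) huv
  have hint : ∀ u ∈ Cf, ∀ v ∈ Cf, u ≠ v → (γ u ∩ γ v).card ≤ 1 := by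
    intro u hu v hv huv
    have hadj := hadjC u hu v hv huv
    by_cases hb : blue u v
    · rw [hg3 u v (hlt u hu) (hlt v hv) hadj hb]; simp
    · rw [hg4 u v (hlt u hu) (hlt v hv) hadj hb]
  -- private colors
  have hpriv : ∀ u : Fin n, ∃ c : ℕ, u ∈ Cf → c ∈ γ u ∧ ∀ u' ∈ Cf, u' ≠ u → c ∉ γ u' := by
    intro u
    by_cases hu : u ∈ Cf
    · have hcard : (γ u).card = t := hg2 u (hlt u hu)
      have hsub : γ u ∩ (Cf.erase u).biUnion γ ⊆ (Cf.erase u).biUnion (fun u' => γ u ∩ γ u') := by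
        intro c hc
        rw [Finset.mem_inter, Finset.mem_biUnion] at hc
        obtain ⟨u', hu', hc2⟩ := hc.2
        exact Finset.mem_biUnion.2 ⟨u', hu', Finset.mem_inter.2 ⟨hc.1, hc2⟩⟩
      have h1 : ((Cf.erase u).biUnion (fun u' => γ u ∩ γ u')).card ≤
          ∑ u' ∈ Cf.erase u, (γ u ∩ γ u').card := Finset.card_biUnion_le
      have h2 : ∑ u' ∈ Cf.erase u, (γ u ∩ γ u').card ≤ (Cf.erase u).card * 1 := by
        refine Finset.sum_le_card_nsmul _ _ _ ?_
        intro u' hu'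
        exact hint u hu u' (Finset.mem_of_mem_erase hu') (Ne.symm (Finset.ne_of_mem_erase hu'))
      have h3 : (Cf.erase u).card = t - 1 := by rw [Finset.card_erase_of_mem hu, hCfcard]
      have h4 : (γ u \ (Cf.erase u).biUnion γ).card + (γ u ∩ (Cf.erase u).biUnion γ).card = t := by
        rw [Finset.card_sdiff_add_card_inter, hcard]
      have h5 : (γ u ∩ (Cf.erase u).biUnion γ).card ≤ t - 1 :=
        le_trans (le_trans (Finset.card_le_card hsub) (le_trans h1 h2)) (by omega)
      have hne : (γ u \ (Cf.erase u).biUnion γ).Nonempty := Finset.card_pos.1 (by omega)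
      obtain ⟨c, hc⟩ := hne
      rw [Finset.mem_sdiff] at hc
      refine ⟨c, fun _ => ⟨hc.1, fun u' hu' hne' hmem => ?_⟩⟩
      exact hc.2 (Finset.mem_biUnion.2 ⟨u', Finset.mem_erase.2 ⟨hne', hu'⟩, hmem⟩)
    · exact ⟨0, fun h => absurd h hu⟩
  choose cp hcp using hpriv
  set B : Finset (Fin n) := Cf.filter (fun u => blue vi u) with hBdef
  set R : Finset (Fin n) := Cf.filter (fun u => ¬ blue vi u) with hRdef
  have hRB : B.card + R.card = t := by
    rw [hBdef, hRdef, Finset.card_filter_add_card_filter_not, hCfcard]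
  have hRCf : R ⊆ Cf := Finset.filter_subset _ _
  have hBCf : B ⊆ Cf := Finset.filter_subset _ _
  set U : Finset ℕ := Cf.biUnion γ with hUdef
  have hUsub : U ⊆ Finset.Icc 1 (t ^ 2 + ω - 1) := by
    intro c hc
    rw [hUdef, Finset.mem_biUnion] at hc
    obtain ⟨u, hu, hcu⟩ := hc
    exact hg1 u (hlt u hu) hcu
  set m : ℕ → ℕ := fun c => (Cf.filter (fun u => c ∈ γ u)).card with hmdef
  have hm2 : ∀ c, m c ≤ 2 := by
    intro c
    refine hg5 Cf hlt ?_ c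
    intro a ha b hb hne
    exact hadjC a (Finset.mem_coe.1 ha) b (Finset.mem_coe.1 hb) hne
  have hm1 : ∀ c ∈ U, 1 ≤ m c := by
    intro c hc
    rw [hUdef, Finset.mem_biUnion] at hc
    obtain ⟨u, hu, hcu⟩ := hc
    rw [hmdef]
    refine Finset.card_pos.2 ⟨u, Finset.mem_filter.2 ⟨hu, hcu⟩⟩
  have hsum : ∑ u ∈ Cf, (γ u).card = ∑ c ∈ U, m c := by
    have h1 : ∀ u ∈ Cf, (γ u).card = ∑ c ∈ U, if c ∈ γ u then 1 else 0 := by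
      intro u hu
      have hsub : γ u ⊆ U := fun c hc => Finset.mem_biUnion.2 ⟨u, hu, hc⟩
      rw [← Finset.card_filter, Finset.filter_mem_eq_inter, Finset.inter_eq_right.2 hsub]
    rw [Finset.sum_congr rfl h1, Finset.sum_comm]
    exact Finset.sum_congr rfl fun c _ => (Finset.card_filter _ _).symm
  have hsumL : ∑ u ∈ Cf, (γ u).card = t * t := by
    rw [Finset.sum_congr rfl fun u hu => hg2 u (hlt u hu), Finset.sum_const, hCfcard,
      smul_eq_mul]
  set D2 : Finset ℕ := U.filter (fun c => m c = 2) with hD2def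
  have hUD2 : U.card + D2.card = t * t := by
    have h1 : ∑ c ∈ U, m c = ∑ c ∈ U, (1 + if m c = 2 then 1 else 0) := by
      refine Finset.sum_congr rfl fun c hc => ?_
      have := hm1 c hc; have := hm2 c
      split <;> omega
    rw [← hsumL, hsum, h1, Finset.sum_add_distrib, Finset.sum_const, smul_eq_mul, mul_one,
      ← Finset.card_filter]
  -- red pairs
  set redPairs : Finset (Fin n × Fin n) :=
    (Cf ×ˢ Cf).filter (fun p => p.1 < p.2 ∧ ¬ blue p.1 p.2) with hrpdef
  set D : Finset (Fin n) := insert vi Cf with hDdef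
  have hDcard : D.card = t + 1 := by
    rw [hDdef, Finset.card_insert_of_notMem hviCf, hCfcard]
  have hDadj : ∀ u ∈ D, ∀ v ∈ D, u ≠ v → H.Adj u v := by
    intro u hu v hv huv
    rw [hDdef, Finset.mem_insert] at hu hv
    rcases hu with rfl | hu
    · rcases hv with rfl | hv
      · exact absurd rfl huv
      · exact hadjvi v hv
    · rcases hv with rfl | hv
      · exact (hadjvi u hu).symm
      · exact hadjC u hu v hv huv
  set RPD : Finset (Fin n × Fin n) :=
    (D ×ˢ D).filter (fun p => p.1 < p.2 ∧ ¬ blue p.1 p.2) with hRPDdef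
  have hd : redPairs.card ≤ D2.card := by
    have hchoice : ∀ p : Fin n × Fin n, ∃ c, p ∈ redPairs → γ p.1 ∩ γ p.2 = {c} := by
      intro p
      by_cases hp : p ∈ redPairs
      · rw [hrpdef, Finset.mem_filter, Finset.mem_product] at hp
        obtain ⟨⟨h1, h2⟩, hlt', hbl⟩ := hp
        have hne : p.1 ≠ p.2 := ne_of_lt hlt'
        have hadj := hadjC p.1 h1 p.2 h2 hne
        obtain ⟨c, hc⟩ := Finset.card_eq_one.1 (hg4 p.1 p.2 (hlt _ h1) (hlt _ h2) hadj hbl)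
        exact ⟨c, fun _ => hc⟩
      · exact ⟨0, fun h => absurd h hp⟩
    choose gc hgc using hchoice
    refine Finset.card_le_card_of_injOn gc ?_ ?_
    · intro p hp
      have hsing := hgc p hp
      rw [hrpdef, Finset.mem_coe, Finset.mem_filter, Finset.mem_product] at hp
      obtain ⟨⟨h1, h2⟩, hlt', hbl⟩ := hp
      have hmem : gc p ∈ γ p.1 ∩ γ p.2 := by rw [hsing]; exact Finset.mem_singleton_self _
      rw [Finset.mem_inter] at hmem
      have hcU : gc p ∈ U := Finset.mem_biUnion.2 ⟨p.1, h1, hmem.1⟩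
      rw [hD2def, Finset.mem_coe, Finset.mem_filter]
      refine ⟨hcU, ?_⟩
      have hge : 2 ≤ m (gc p) := by
        have hsub : ({p.1, p.2} : Finset (Fin n)) ⊆ Cf.filter (fun u => gc p ∈ γ u) := by
          intro a ha
          rw [Finset.mem_insert, Finset.mem_singleton] at ha
          rcases ha with rfl | rfl
          · exact Finset.mem_filter.2 ⟨h1, hmem.1⟩
          · exact Finset.mem_filter.2 ⟨h2, hmem.2⟩
        have hcc := Finset.card_le_card hsub
        rw [Finset.card_pair (ne_of_lt hlt')] at hcc
        rw [hmdef]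
        exact hcc
      have := hm2 (gc p)
      omega
    · intro p hp q hq hpq
      rw [Finset.mem_coe] at hp hq
      have hsp := hgc p hp
      have hsq := hgc q hq
      have hmemp : gc p ∈ γ p.1 ∩ γ p.2 := by rw [hsp]; exact Finset.mem_singleton_self _
      have hmemq : gc q ∈ γ q.1 ∩ γ q.2 := by rw [hsq]; exact Finset.mem_singleton_self _
      rw [Finset.mem_inter] at hmemp hmemq
      rw [hrpdef, Finset.mem_filter, Finset.mem_product] at hp hq
      obtain ⟨⟨hp1, hp2⟩, hplt, -⟩ := hp
      obtain ⟨⟨hq1, hq2⟩, hqlt, -⟩ := hq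
      have hq1c : gc p ∈ γ q.1 := by rw [hpq]; exact hmemq.1
      have hq2c : gc p ∈ γ q.2 := by rw [hpq]; exact hmemq.2
      have hsub : ({p.1, p.2} : Finset (Fin n)) ⊆ Cf.filter (fun u => gc p ∈ γ u) := by
        intro a ha
        rw [Finset.mem_insert, Finset.mem_singleton] at ha
        rcases ha with rfl | rfl
        · exact Finset.mem_filter.2 ⟨hp1, hmemp.1⟩
        · exact Finset.mem_filter.2 ⟨hp2, hmemp.2⟩
      have hcle : (Cf.filter (fun u => gc p ∈ γ u)).card ≤ ({p.1, p.2} : Finset (Fin n)).card := by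
        rw [Finset.card_pair (ne_of_lt hplt)]
        have := hm2 (gc p)
        rw [hmdef] at this
        exact this
      have heq : ({p.1, p.2} : Finset (Fin n)) = Cf.filter (fun u => gc p ∈ γ u) :=
        Finset.eq_of_subset_of_card_le hsub hcle
      have hq1m : q.1 ∈ ({p.1, p.2} : Finset (Fin n)) := by
        rw [heq]; exact Finset.mem_filter.2 ⟨hq1, hq1c⟩
      have hq2m : q.2 ∈ ({p.1, p.2} : Finset (Fin n)) := by
        rw [heq]; exact Finset.mem_filter.2 ⟨hq2, hq2c⟩
      rw [Finset.mem_insert, Finset.mem_singleton] at hq1m hq2m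
      have hpltv : (p.1 : ℕ) < (p.2 : ℕ) := hplt
      have hqltv : (q.1 : ℕ) < (q.2 : ℕ) := hqlt
      have v1 : (q.1 : ℕ) = (p.1 : ℕ) ∨ (q.1 : ℕ) = (p.2 : ℕ) := by
        rcases hq1m with h | h
        · exact Or.inl (congrArg Fin.val h)
        · exact Or.inr (congrArg Fin.val h)
      have v2 : (q.2 : ℕ) = (p.1 : ℕ) ∨ (q.2 : ℕ) = (p.2 : ℕ) := by
        rcases hq2m with h | h
        · exact Or.inl (congrArg Fin.val h)
        · exact Or.inr (congrArg Fin.val h)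
      have hv12 : (p.1 : ℕ) = (q.1 : ℕ) ∧ (p.2 : ℕ) = (q.2 : ℕ) := by omega
      exact Prod.ext_iff.2 ⟨Fin.val_injective hv12.1, Fin.val_injective hv12.2⟩
  have he : t + 1 ≤ RPD.card + ω := by
    have hcand : ((D.powerset).filter
        (fun I => ∀ u ∈ I, ∀ v ∈ I, u ≠ v → blue u v)).Nonempty :=
      ⟨∅, Finset.mem_filter.2 ⟨Finset.empty_mem_powerset _, by simp⟩⟩
    obtain ⟨I, hImem, hImax⟩ := Finset.exists_max_image _ Finset.card hcand
    rw [Finset.mem_filter, Finset.mem_powerset] at hImem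
    obtain ⟨hIsub, hIblue⟩ := hImem
    have hIω : I.card ≤ ω := by
      by_contra hcon
      push_neg at hcon
      obtain ⟨S, hSsub, hScard⟩ := Finset.exists_subset_card_eq (by omega : ω + 1 ≤ I.card)
      refine hnoblue ⟨S, hScard, ?_⟩
      intro a ha b hb hab
      rw [Finset.mem_coe] at ha hb
      exact ⟨hDadj a (hIsub (hSsub ha)) b (hIsub (hSsub hb)) hab,
        hIblue a (hSsub ha) b (hSsub hb) hab⟩
    have hext : ∀ v ∈ D \ I, ∃ w ∈ I, ¬ blue v w := by
      intro v hv
      rw [Finset.mem_sdiff] at hv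
      by_contra hcon
      push_neg at hcon
      have hins : insert v I ∈ (D.powerset).filter
          (fun I => ∀ u ∈ I, ∀ v ∈ I, u ≠ v → blue u v) := by
        rw [Finset.mem_filter, Finset.mem_powerset]
        constructor
        · exact Finset.insert_subset hv.1 hIsub
        · intro a ha b hb hab
          rw [Finset.mem_insert] at ha hb
          rcases ha with rfl | ha
          · rcases hb with rfl | hb
            · exact absurd rfl hab
            · exact hcon b hb
          · rcases hb with rfl | hb
            · exact hsymm _ _ (hcon a ha)
            · exact hIblue a ha b hb hab
      have := hImax _ hins
      rw [Finset.card_insert_of_notMem hv.2] at this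
      omega
    have hchoice2 : ∀ v : Fin n, ∃ p : Fin n × Fin n, v ∈ D \ I →
        p ∈ RPD ∧ ((p.1 = v ∧ p.2 ∈ I) ∨ (p.2 = v ∧ p.1 ∈ I)) := by
      intro v
      by_cases hv : v ∈ D \ I
      · obtain ⟨w, hwI, hwb⟩ := hext v hv
        rw [Finset.mem_sdiff] at hv
        have hwD : w ∈ D := hIsub hwI
        have hne : v ≠ w := fun h => hv.2 (h ▸ hwI)
        rcases lt_or_gt_of_ne hne with hlt' | hgt
        · exact ⟨(v, w), fun _ => ⟨Finset.mem_filter.2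
            ⟨Finset.mem_product.2 ⟨hv.1, hwD⟩, hlt', hwb⟩, Or.inl ⟨rfl, hwI⟩⟩⟩
        · exact ⟨(w, v), fun _ => ⟨Finset.mem_filter.2
            ⟨Finset.mem_product.2 ⟨hwD, hv.1⟩, hgt, fun hb => hwb (hsymm _ _ hb)⟩,
            Or.inr ⟨rfl, hwI⟩⟩⟩
      · exact ⟨(v, v), fun h => absurd h hv⟩
    choose ψ hψ using hchoice2
    have hinj : Set.InjOn ψ ↑(D \ I) := by
      intro a ha b hb hab
      rw [Finset.mem_coe] at ha hb
      have hpa := hψ a ha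
      have hpb := hψ b hb
      have haI : a ∉ I := (Finset.mem_sdiff.1 ha).2
      have hbI : b ∉ I := (Finset.mem_sdiff.1 hb).2
      rcases hpa.2 with ⟨h1, h2⟩ | ⟨h1, h2⟩ <;> rcases hpb.2 with ⟨h3, h4⟩ | ⟨h3, h4⟩
      · rw [← h1, hab, h3]
      · exact absurd (by rw [← h1, hab]; exact h4) haI
      · exact absurd (by rw [← h3, ← hab]; exact h2) hbI
      · rw [← h1, hab, h3]
    have hcard3 : (D \ I).card ≤ RPD.card :=
      Finset.card_le_card_of_injOn ψ (fun v hv => (hψ v (Finset.mem_coe.1 hv)).1) hinj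
    have hsd : (D \ I).card + I.card = D.card := Finset.card_sdiff_add_card_eq_card hIsub
    omega
  have hf : RPD.card = redPairs.card + R.card := by
    have himg : (R.image (fun u => (u, vi))).card = R.card :=
      Finset.card_image_of_injective _ (fun a b h => (Prod.ext_iff.1 h).1)
    have hun : RPD = redPairs ∪ R.image (fun u => (u, vi)) := by
      ext p
      simp only [hRPDdef, hrpdef, Finset.mem_filter, Finset.mem_product, Finset.mem_union,
        Finset.mem_image, hDdef, Finset.mem_insert]
      constructor
      · rintro ⟨⟨h1, h2⟩, hlt', hbl⟩
        rcases h1 with h1 | h1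
        · exfalso
          rcases h2 with h2 | h2
          · rw [h1, h2] at hlt'; exact lt_irrefl _ hlt'
          · have hlt2 := ((hmemCf p.2).1 h2).1
            rw [h1] at hlt'
            exact lt_irrefl _ (lt_trans hlt' hlt2)
        · rcases h2 with h2 | h2
          · right
            refine ⟨p.1, ?_, ?_⟩
            · refine Finset.mem_filter.2 ⟨h1, fun hb => hbl ?_⟩
              rw [h2]
              exact hsymm vi p.1 hb
            · exact Prod.ext_iff.2 ⟨rfl, h2.symm⟩
          · left; exact ⟨⟨h1, h2⟩, hlt', hbl⟩
      · rintro (⟨⟨h1, h2⟩, hlt', hbl⟩ | ⟨u, hu, rfl⟩)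
        · exact ⟨⟨Or.inr h1, Or.inr h2⟩, hlt', hbl⟩
        · have hu' := Finset.mem_filter.1 hu
          refine ⟨⟨Or.inr hu'.1, Or.inl rfl⟩, ?_, ?_⟩
          · exact ((hmemCf u).1 hu'.1).1
          · exact fun hb => hu'.2 (hsymm u vi hb)
    have hdisj2 : Disjoint redPairs (R.image (fun u => (u, vi))) := by
      rw [Finset.disjoint_left]
      intro p hp hq
      rw [hrpdef, Finset.mem_filter, Finset.mem_product] at hp
      rw [Finset.mem_image] at hq
      obtain ⟨u, hu, hueq⟩ := hq
      rw [← hueq] at hp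
      exact hviCf hp.1.2
    rw [hun, Finset.card_union_of_disjoint hdisj2, himg]
  set avail : Finset ℕ := Finset.Icc 1 (t ^ 2 + ω - 1) \ U with havdef
  have hIccCard : (Finset.Icc 1 (t ^ 2 + ω - 1)).card = t ^ 2 + ω - 1 := by
    rw [Nat.card_Icc]; omega
  have havail : avail.card + U.card = t ^ 2 + ω - 1 := by
    rw [havdef, Finset.card_sdiff_add_card_eq_card hUsub, hIccCard]
  have htsq : t ^ 2 = t * t := by ring
  have hBa : B.card ≤ avail.card := by omega
  obtain ⟨F, hFsub, hFcard⟩ := Finset.exists_subset_card_eq hBa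
  set γi : Finset ℕ := R.image cp ∪ F with hγidef
  set γ' : Fin n → Finset ℕ := Function.update γ vi γi with hγ'def
  -- basic facts about F and cp
  have hFnotU : ∀ c ∈ F, c ∉ U := by
    intro c hc
    have := hFsub hc
    rw [havdef, Finset.mem_sdiff] at this
    exact this.2
  have hFnot : ∀ c ∈ F, ∀ u ∈ Cf, c ∉ γ u := by
    intro c hc u hu hmem
    exact hFnotU c hc (Finset.mem_biUnion.2 ⟨u, hu, hmem⟩)
  have hFIcc : F ⊆ Finset.Icc 1 (t ^ 2 + ω - 1) := by
    intro c hc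
    have := hFsub hc
    rw [havdef, Finset.mem_sdiff] at this
    exact this.1
  have hcpMem : ∀ u ∈ R, cp u ∈ γ u := fun u hu => (hcp u (hRCf hu)).1
  have hcpNot : ∀ u ∈ R, ∀ u' ∈ Cf, u' ≠ u → cp u ∉ γ u' :=
    fun u hu => (hcp u (hRCf hu)).2
  have hγiIcc : γi ⊆ Finset.Icc 1 (t ^ 2 + ω - 1) := by
    intro c hc
    rw [hγidef, Finset.mem_union] at hc
    rcases hc with hc | hc
    · rw [Finset.mem_image] at hc
      obtain ⟨u, hu, rfl⟩ := hc
      exact hg1 u (hlt u (hRCf hu)) (hcpMem u hu)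
    · exact hFIcc hc
  have hdisj : Disjoint (R.image cp) F := by
    rw [Finset.disjoint_left]
    intro c hc hcF
    rw [Finset.mem_image] at hc
    obtain ⟨u, hu, rfl⟩ := hc
    exact hFnot _ hcF u (hRCf hu) (hcpMem u hu)
  have hγicard : γi.card = t := by
    rw [hγidef, Finset.card_union_of_disjoint hdisj, hFcard,
      Finset.card_image_of_injOn, ← hRB]
    · omega
    · intro u hu u' hu' hcc
      by_contra hne
      have h1 := hcpMem u (Finset.mem_coe.1 hu)
      have h2 := hcpNot u' (Finset.mem_coe.1 hu') u (hRCf (Finset.mem_coe.1 hu)) hne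
      rw [← hcc] at h2
      exact h2 h1
  have hmemγi : ∀ c, c ∈ γi ↔ (∃ u ∈ R, cp u = c) ∨ c ∈ F := by
    intro c
    rw [hγidef, Finset.mem_union, Finset.mem_image]
  have hblueInt : ∀ u ∈ B, γi ∩ γ u = ∅ := by
    intro u hu
    rw [Finset.eq_empty_iff_forall_notMem]
    intro c hc
    rw [Finset.mem_inter, hmemγi] at hc
    obtain ⟨hc1, hc2⟩ := hc
    rcases hc1 with ⟨u', hu', rfl⟩ | hcF
    · have hne : u ≠ u' := by
        intro h
        subst h
        rw [hBdef, Finset.mem_filter] at hu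
        rw [hRdef, Finset.mem_filter] at hu'
        exact hu'.2 hu.2
      exact hcpNot u' hu' u (hBCf hu) hne hc2
    · exact hFnot c hcF u (hBCf hu) hc2
  have hredInt : ∀ u ∈ R, γi ∩ γ u = {cp u} := by
    intro u hu
    ext c
    rw [Finset.mem_inter, hmemγi, Finset.mem_singleton]
    constructor
    · rintro ⟨⟨u', hu', rfl⟩ | hcF, hc2⟩
      · by_contra hne
        have hne' : u ≠ u' := by
          intro h; subst h
          exact hne rfl
        exact hcpNot u' hu' u (hRCf hu) hne' hc2
      · exact absurd hc2 (hFnot c hcF u (hRCf hu))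
    · rintro rfl
      exact ⟨Or.inl ⟨u, hu, rfl⟩, hcpMem u hu⟩
  -- assemble
  have hupd_lt : ∀ v : Fin n, (v : ℕ) < i → γ' v = γ v := by
    intro v hv
    rw [hγ'def]
    exact Function.update_of_ne (fun h => by rw [h] at hv; exact lt_irrefl i hv) _ _
  have hupd_vi : γ' vi = γi := by rw [hγ'def]; exact Function.update_self _ _ _
  have hvcase : ∀ v : Fin n, (v : ℕ) < i + 1 → (v : ℕ) < i ∨ v = vi := by
    intro v hv
    rcases Nat.lt_or_ge (v : ℕ) i with h | h
    · exact Or.inl h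
    · exact Or.inr (Fin.ext (by omega))
  have hCmem : ∀ u : Fin n, (u : ℕ) < i → H.Adj vi u → u ∈ Cf := by
    intro u hu hadj
    exact (hmemCf u).2 ⟨Fin.lt_def.2 hu, hadj⟩
  refine ⟨γ', ?_, ?_, ?_, ?_, ?_⟩
  · intro v hv
    rcases hvcase v hv with h | rfl
    · rw [hupd_lt v h]; exact hg1 v h
    · rw [hupd_vi]; exact hγiIcc
  · intro v hv
    rcases hvcase v hv with h | rfl
    · rw [hupd_lt v h]; exact hg2 v h
    · rw [hupd_vi]; exact hγicard
  · intro u v hu hv hadj hblue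
    rcases hvcase u hu with h1 | rfl <;> rcases hvcase v hv with h2 | rfl
    · rw [hupd_lt u h1, hupd_lt v h2]; exact hg3 u v h1 h2 hadj hblue
    · rw [hupd_lt u h1, hupd_vi, Finset.inter_comm]
      exact hblueInt u (Finset.mem_filter.2 ⟨hCmem u h1 hadj.symm, hsymm u vi hblue⟩)
    · rw [hupd_lt v h2, hupd_vi]
      exact hblueInt v (Finset.mem_filter.2 ⟨hCmem v h2 hadj, hblue⟩)
    · exact absurd rfl hadj.ne
  · intro u v hu hv hadj hblue
    rcases hvcase u hu with h1 | rfl <;> rcases hvcase v hv with h2 | rfl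
    · rw [hupd_lt u h1, hupd_lt v h2]; exact hg4 u v h1 h2 hadj hblue
    · have huR : u ∈ R := Finset.mem_filter.2 ⟨hCmem u h1 hadj.symm,
        fun hb => hblue (hsymm vi u hb)⟩
      rw [hupd_lt u h1, hupd_vi, Finset.inter_comm, hredInt u huR, Finset.card_singleton]
    · have hvR : v ∈ R := Finset.mem_filter.2 ⟨hCmem v h2 hadj, hblue⟩
      rw [hupd_lt v h2, hupd_vi, hredInt v hvR, Finset.card_singleton]
    · exact absurd rfl hadj.ne
  · intro S hS hpair c
    by_cases hviS : vi ∈ S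
    · set S' : Finset (Fin n) := S.erase vi with hS'def
      have hS'Cf : S' ⊆ Cf := by
        intro v hv
        have hvne := Finset.ne_of_mem_erase hv
        have hvS := Finset.mem_of_mem_erase hv
        have hvlt : (v : ℕ) < i := by
          rcases hvcase v (hS v hvS) with h | rfl
          · exact h
          · exact absurd rfl hvne
        exact hCmem v hvlt (hpair (Finset.mem_coe.2 hviS) (Finset.mem_coe.2 hvS)
          (Ne.symm hvne))
      have hS'γ : ∀ v ∈ S', γ' v = γ v := fun v hv => hupd_lt v (hlt v (hS'Cf hv))
      have hfilsub : S.filter (fun v => c ∈ γ' v) ⊆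
          insert vi (S'.filter (fun v => c ∈ γ v)) := by
        intro v hv
        rw [Finset.mem_filter] at hv
        by_cases hvvi : v = vi
        · exact Finset.mem_insert.2 (Or.inl hvvi)
        · refine Finset.mem_insert.2 (Or.inr ?_)
          have hvS' : v ∈ S' := Finset.mem_erase.2 ⟨hvvi, hv.1⟩
          refine Finset.mem_filter.2 ⟨hvS', ?_⟩
          rw [← hS'γ v hvS']
          exact hv.2
      have hS'pair : (S' : Set (Fin n)).Pairwise H.Adj := by
        intro a ha b hb hab
        exact hpair (Finset.mem_coe.2 (Finset.mem_of_mem_erase (Finset.mem_coe.1 ha)))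
          (Finset.mem_coe.2 (Finset.mem_of_mem_erase (Finset.mem_coe.1 hb))) hab
      by_cases hcγi : c ∈ γi
      · -- at most one vertex of S' can have the color c
        have hS'1 : (S'.filter (fun v => c ∈ γ v)).card ≤ 1 := by
          rw [hmemγi] at hcγi
          rcases hcγi with ⟨u, hu, rfl⟩ | hcF
          · refine Finset.card_le_one.2 ?_
            intro a ha b hb
            rw [Finset.mem_filter] at ha hb
            have ha' : a = u := by
              by_contra hne
              exact hcpNot u hu a (hS'Cf ha.1) hne ha.2
            have hb' : b = u := by
              by_contra hne
              exact hcpNot u hu b (hS'Cf hb.1) hne hb.2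
            rw [ha', hb']
          · have hemp : S'.filter (fun v => c ∈ γ v) = ∅ := by
              rw [Finset.filter_eq_empty_iff]
              intro a ha
              exact hFnot c hcF a (hS'Cf ha)
            rw [hemp, Finset.card_empty]
            omega
        calc (S.filter (fun v => c ∈ γ' v)).card
            ≤ (insert vi (S'.filter (fun v => c ∈ γ v))).card := Finset.card_le_card hfilsub
          _ ≤ (S'.filter (fun v => c ∈ γ v)).card + 1 := Finset.card_insert_le _ _
          _ ≤ 2 := by omega
      · have hfilsub2 : S.filter (fun v => c ∈ γ' v) ⊆ S'.filter (fun v => c ∈ γ v) := by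
          intro v hv
          rw [Finset.mem_filter] at hv
          by_cases hvvi : v = vi
          · subst hvvi
            rw [hupd_vi] at hv
            exact absurd hv.2 hcγi
          · have hvS' : v ∈ S' := Finset.mem_erase.2 ⟨hvvi, hv.1⟩
            refine Finset.mem_filter.2 ⟨hvS', ?_⟩
            rw [← hS'γ v hvS']
            exact hv.2
        refine le_trans (Finset.card_le_card hfilsub2) ?_
        exact hg5 S' (fun v hv => hlt v (hS'Cf hv)) hS'pair c
    · have hSlt : ∀ v ∈ S, (v : ℕ) < i := by
        intro v hv
        rcases hvcase v (hS v hv) with h | rfl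
        · exact h
        · exact absurd hv hviS
      have : S.filter (fun v => c ∈ γ' v) = S.filter (fun v => c ∈ γ v) := by
        refine Finset.filter_congr ?_
        intro v hv
        rw [hupd_lt v (hSlt v hv)]
      rw [this]
      exact hg5 S hSlt hpair c

theorem coloring_strategy_on_ttree (t ω n : ℕ) (ht : 1 ≤ t) (hω2 : 2 ≤ ω) (hωt : ω ≤ t)
    (H : SimpleGraph (Fin n)) (hH : IsTTree t n H)
    (blue : Fin n → Fin n → Prop) (hsymm : ∀ u v, blue u v → blue v u)
    (hinit : ∀ i j : Fin n, (i : ℕ) < t → (j : ℕ) < t → i ≠ j → ¬blue i j)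
    (hnoblue : ¬∃ S : Finset (Fin n), S.card = ω + 1 ∧
        (S : Set (Fin n)).Pairwise (fun u v => H.Adj u v ∧ blue u v)) :
    ∃ γ : Fin n → Finset ℕ,
      (∀ v, γ v ⊆ Finset.Icc 1 (t ^ 2 + ω - 1)) ∧
      (∀ v, (γ v).card = t) ∧
      (∀ u v : Fin n, H.Adj u v → blue u v → γ u ∩ γ v = ∅) ∧
      (∀ u v : Fin n, H.Adj u v → ¬blue u v → (γ u ∩ γ v).card = 1) := by
  classical
  have htn : t ≤ n := hH.1
  have main : ∀ k : ℕ, t ≤ k → k ≤ n → ∃ γ, Good t ω H blue γ k := by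
    intro k
    induction k with
    | zero => intro h1 _; omega
    | succ k ih =>
      intro h1 h2
      rcases Nat.lt_or_ge k t with hk | hk
      · have : t = k + 1 := by omega
        exact this ▸ ⟨gamma0 t, good_init ht hω2 H blue hinit⟩
      · obtain ⟨γ, hγ⟩ := ih hk (by omega)
        exact good_step ht hω2 hωt H hH blue hsymm hnoblue hk (by omega) hγ
  obtain ⟨γ, hγ⟩ := main n htn le_rfl
  refine ⟨γ, fun v => hγ.1 v v.isLt, fun v => hγ.2.1 v v.isLt, ?_, ?_⟩
  · intro u v hadj hblue
    exact hγ.2.2.1 u v u.isLt v.isLt hadj hblue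
  · intro u v hadj hblue
    exact hγ.2.2.2.1 u v u.isLt v.isLt hadj hblue
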